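/- Let m ≥ 2 and n ≥ 2m+1. The sequence π = ((n−1)^m, m^{n−m}), consisting of m terms equal to n−1 and n−m terms equal to m, is graphic but not potentially C_{2m+1}-graphic; consequently σ(C_{2m+1}, n) ≥ σ(π) + 2 = m(2n − m − 1) + 2. -/

import Mathlib

/-- `G` contains a cycle of length `r`. -/
def hasCycleOfLength {V : Type*} (G : SimpleGraph V) (r : ℕ) : Prop :=
  ∃ (v : V) (c : G.Walk v v), c.IsCycle ∧ c.length = r

/-- `G` is a realization of the sequence `d`, i.e. `d` is its degree sequence. -/
def IsDegreeSeq {n : ℕ} (G : SimpleGraph (Fin n)) (d : Fin n → ℕ) : Prop :=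
  ∀ i, (G.neighborSet i).ncard = d i

/-- The sequence `d` is graphic: it is the degree sequence of a simple graph. -/
def Graphic {n : ℕ} (d : Fin n → ℕ) : Prop :=
  ∃ G : SimpleGraph (Fin n), IsDegreeSeq G d

/-- `d` is potentially ₃Cℓ-graphic: some realization contains cycles of every
length `r` with `3 ≤ r ≤ ℓ`. -/
def Pot3C {n : ℕ} (ℓ : ℕ) (d : Fin n → ℕ) : Prop :=
  ∃ G : SimpleGraph (Fin n), IsDegreeSeq G d ∧ ∀ r, 3 ≤ r → r ≤ ℓ → hasCycleOfLength G r

/-- `d` is potentially Cℓ-graphic: some realization contains a cycle of length `ℓ`. -/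
def PotC {n : ℕ} (ℓ : ℕ) (d : Fin n → ℕ) : Prop :=
  ∃ G : SimpleGraph (Fin n), IsDegreeSeq G d ∧ hasCycleOfLength G ℓ

/-- `d` has a realization `G` containing cycles `C₃, …, C_ℓ` on those vertices with
degrees `d 0, …, d (ℓ-1)`: the induced subgraph on some vertex set `S`, whose multiset
of degrees is that of the first `ℓ` terms of `d`, contains cycles of all lengths
from `3` to `ℓ`. -/
def RealizationWithCyclesOn {n : ℕ} (ℓ : ℕ) (d : Fin n → ℕ) : Prop :=
  ∃ (G : SimpleGraph (Fin n)) (S : Finset (Fin n)),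
    IsDegreeSeq G d ∧ S.card = ℓ ∧
    S.val.map d = (Finset.univ.filter (fun i : Fin n => (i : ℕ) < ℓ)).val.map d ∧
    ∀ r, 3 ≤ r → r ≤ ℓ → hasCycleOfLength (G.induce (S : Set (Fin n))) r

/-- The sequence `((n-1)^m, m^{n-m})`. -/
def seqOddLB (m n : ℕ) : Fin n → ℕ := fun j =>
  if (j : ℕ) < m then n - 1 else m

private lemma card_filter_lt (m n : ℕ) (h : m ≤ n) :
    (Finset.univ.filter (fun j : Fin n => (j : ℕ) < m)).card = m := by
  apply Finset.card_eq_of_bijective (fun k hk => ⟨k, lt_of_lt_of_le hk h⟩)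
  · intro a ha
    simp only [Finset.mem_filter, Finset.mem_univ, true_and] at ha
    exact ⟨a, ha, Fin.ext rfl⟩
  · intro k hk; simp [hk]
  · intro k k' hk hk' hkk'
    simpa using congrArg Fin.val hkk'

private lemma length_le_countP_add {α : Type*} (p q : α → Bool) (l : List α)
    (hl : ∀ x ∈ l, p x ∨ q x) : l.length ≤ l.countP p + l.countP q := by
  induction l with
  | nil => simp
  | cons a l ih =>
    have h1 := ih (fun x hx => hl x (List.mem_cons_of_mem a hx))
    rcases hl a List.mem_cons_self with h | h <;>
      simp [List.countP_cons, h] <;> omega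

private lemma countP_mem_le_card {α : Type*} [DecidableEq α] (A : Finset α) (l : List α)
    (hl : l.Nodup) : l.countP (fun x => decide (x ∈ A)) ≤ A.card := by
  rw [List.countP_eq_length_filter]
  have hn : (l.filter (fun x => decide (x ∈ A))).Nodup := hl.filter _
  rw [← List.toFinset_card_of_nodup hn]
  apply Finset.card_le_card
  intro x hx
  simp only [List.mem_toFinset, List.mem_filter] at hx
  simpa using hx.2

open SimpleGraph in
private lemma not_potC (m n : ℕ) (hm : 2 ≤ m) (hn : 2 * m + 1 ≤ n) :
    ¬ PotC (2 * m + 1) (seqOddLB m n) := by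
  classical
  rintro ⟨G, hdeg, v, c, hc, hlen⟩
  set A : Finset (Fin n) := Finset.univ.filter (fun i : Fin n => (i : ℕ) < m) with hA
  have hAcard : A.card = m := card_filter_lt m n (by omega)
  -- every vertex of index < m is adjacent to every other vertex
  have step1 : ∀ i : Fin n, (i : ℕ) < m → ∀ j : Fin n, j ≠ i → G.Adj i j := by
    intro i hi
    have hsub : G.neighborSet i ⊆ {i}ᶜ := by
      intro j hj
      simp only [Set.mem_compl_iff, Set.mem_singleton_iff]
      rintro rfl
      exact G.irrefl hj
    have h1 : ({i}ᶜ : Set (Fin n)).ncard = n - 1 := by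
      rw [show ({i}ᶜ : Set (Fin n)) = ↑(({i} : Finset (Fin n))ᶜ) by simp,
        Set.ncard_coe_finset, Finset.card_compl, Finset.card_singleton, Fintype.card_fin]
    have h2 : (G.neighborSet i).ncard = n - 1 := by
      rw [hdeg i]; simp [seqOddLB, hi]
    have heq := Set.eq_of_subset_of_ncard_le hsub (by omega)
    intro j hj
    have hjmem : j ∈ G.neighborSet i := by
      rw [heq]; simpa using hj
    exact hjmem
  -- vertices of index ≥ m form an independent set
  have step2 : ∀ j k : Fin n, m ≤ (j : ℕ) → m ≤ (k : ℕ) → ¬ G.Adj j k := by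
    intro j k hj hk hadj
    have hsub : (↑(insert k A) : Set (Fin n)) ⊆ G.neighborSet j := by
      intro x hx
      simp only [Finset.coe_insert, Set.mem_insert_iff, Finset.mem_coe, hA,
        Finset.mem_filter, Finset.mem_univ, true_and] at hx
      rcases hx with rfl | hx
      · exact hadj
      · exact (step1 x hx j (by intro h; subst h; omega)).symm
    have hkA : k ∉ A := by simp only [hA, Finset.mem_filter, Finset.mem_univ, true_and]; omega
    have hcard1 : (↑(insert k A) : Set (Fin n)).ncard = m + 1 := by
      rw [Set.ncard_coe_finset, Finset.card_insert_of_notMem hkA, hAcard]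
    have hcard2 : (G.neighborSet j).ncard = m := by
      rw [hdeg j]; simp [seqOddLB, Nat.not_lt.mpr hj]
    have := Set.ncard_le_ncard hsub (Set.toFinite _)
    omega
  -- counting along the cycle
  have hdartlen : c.darts.length = 2 * m + 1 := by rw [Walk.length_darts, hlen]
  have hdartA : ∀ d ∈ c.darts, (decide (d.fst ∈ A) : Bool) ∨ (decide (d.snd ∈ A) : Bool) := by
    intro d _
    by_contra h
    push_neg at h
    have h1' : d.fst ∉ A := by simpa using h.1
    have h2' : d.snd ∉ A := by simpa using h.2
    simp only [hA, Finset.mem_filter, Finset.mem_univ, true_and, not_lt] at h1' h2'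
    exact step2 _ _ h1' h2' d.adj
  have key := length_le_countP_add _ _ c.darts hdartA
  -- the tail of the support
  have htail_nodup : c.support.tail.Nodup := hc.support_nodup
  have hsupl : c.support.length = 2 * m + 1 + 1 := by
    rw [Walk.length_support, hlen]
  have htail_len : c.support.tail.length = 2 * m + 1 := by
    rw [List.length_tail, hsupl]
    omega
  have htne : c.support.tail ≠ [] := by
    intro h; rw [h] at htail_len; simp at htail_len
  have hcount2 : c.darts.countP (fun d => decide (d.snd ∈ A)) ≤ m := by
    have h := List.countP_map (p := fun x : Fin n => decide (x ∈ A)) (f := fun d : G.Dart => d.snd) (l := c.darts)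
    rw [c.map_snd_darts] at h
    rw [show (fun d : G.Dart => decide (d.snd ∈ A)) = ((fun x : Fin n => decide (x ∈ A)) ∘ (fun d : G.Dart => d.snd)) from rfl, ← h]
    calc _ ≤ A.card := countP_mem_le_card A _ htail_nodup
    _ = m := hAcard
  -- dropLast of the support is nodup
  have hlastv : c.support.tail.getLast htne = v := by
    rw [List.getLast_tail]
    exact c.getLast_support
  have hteq : c.support.tail.dropLast ++ [v] = c.support.tail := by
    have h := List.dropLast_concat_getLast htne
    rwa [hlastv] at h
  have hdl_nodup : c.support.dropLast.Nodup := by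
    have h1 : c.support.dropLast = v :: c.support.tail.dropLast := by
      conv_lhs => rw [c.support_eq_cons]
      exact List.dropLast_cons_of_ne_nil htne
    rw [h1]
    have h2 : (c.support.tail.dropLast ++ [v]).Nodup := by rw [hteq]; exact htail_nodup
    rw [List.nodup_append] at h2
    refine List.nodup_cons.mpr ⟨?_, h2.1⟩
    intro hv
    exact h2.2.2 v hv v (by simp) rfl
  have hcount1 : c.darts.countP (fun d => decide (d.fst ∈ A)) ≤ m := by
    have h := List.countP_map (p := fun x : Fin n => decide (x ∈ A)) (f := fun d : G.Dart => d.fst) (l := c.darts)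
    rw [c.map_fst_darts] at h
    rw [show (fun d : G.Dart => decide (d.fst ∈ A)) = ((fun x : Fin n => decide (x ∈ A)) ∘ (fun d : G.Dart => d.fst)) from rfl, ← h]
    calc _ ≤ A.card := countP_mem_le_card A _ hdl_nodup
    _ = m := hAcard
  omega

private def splitG (m n : ℕ) : SimpleGraph (Fin n) where
  Adj i j := i ≠ j ∧ ((i : ℕ) < m ∨ (j : ℕ) < m)
  symm := by constructor; rintro i j ⟨h1, h2⟩; exact ⟨h1.symm, h2.symm⟩
  loopless := by constructor; rintro i ⟨h, _⟩; exact h rfl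

private lemma graphic_seq (m n : ℕ) (hn' : m ≤ n) : Graphic (seqOddLB m n) := by
  classical
  refine ⟨splitG m n, fun i => ?_⟩
  have hset : (splitG m n).neighborSet i
      = ↑(Finset.univ.filter (fun j : Fin n => i ≠ j ∧ ((i : ℕ) < m ∨ (j : ℕ) < m))) := by
    ext j; simp [SimpleGraph.neighborSet, splitG]
  rw [hset, Set.ncard_coe_finset]
  by_cases hi : (i : ℕ) < m
  · have heq : Finset.univ.filter (fun j : Fin n => i ≠ j ∧ ((i : ℕ) < m ∨ (j : ℕ) < m))
        = Finset.univ.erase i := by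
      ext j
      simp only [Finset.mem_filter, Finset.mem_univ, true_and, Finset.mem_erase, and_true]
      constructor
      · rintro ⟨h1, _⟩ h; exact h1 h.symm
      · intro h; exact ⟨fun h' => h h'.symm, Or.inl hi⟩
    rw [heq, Finset.card_erase_of_mem (Finset.mem_univ i), Finset.card_univ, Fintype.card_fin]
    simp [seqOddLB, hi]
  · have heq : Finset.univ.filter (fun j : Fin n => i ≠ j ∧ ((i : ℕ) < m ∨ (j : ℕ) < m))
        = Finset.univ.filter (fun j : Fin n => (j : ℕ) < m) := by
      ext j
      simp only [Finset.mem_filter, Finset.mem_univ, true_and]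
      constructor
      · rintro ⟨h1, h2 | h2⟩
        · omega
        · exact h2
      · intro h; exact ⟨by intro h'; subst h'; omega, Or.inr h⟩
    rw [heq, card_filter_lt m n hn']
    simp [seqOddLB, hi]

private lemma sum_seq (m n : ℕ) (hm : 2 ≤ m) (hn : 2 * m + 1 ≤ n) :
    ∑ i, seqOddLB m n i = m * (2 * n - m - 1) := by
  classical
  have h1 : (Finset.univ.filter (fun j : Fin n => (j : ℕ) < m)).card = m :=
    card_filter_lt m n (by omega)
  have h2 : (Finset.univ.filter (fun j : Fin n => ¬ (j : ℕ) < m)).card = n - m := by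
    have h := Finset.card_filter_add_card_filter_not
      (s := (Finset.univ : Finset (Fin n))) (p := fun j : Fin n => (j : ℕ) < m)
    rw [Finset.card_univ, Fintype.card_fin] at h
    omega
  calc ∑ i, seqOddLB m n i
      = ∑ _i ∈ Finset.univ.filter (fun j : Fin n => (j : ℕ) < m), (n - 1)
        + ∑ _i ∈ Finset.univ.filter (fun j : Fin n => ¬ (j : ℕ) < m), m := by
        rw [← Finset.sum_filter_add_sum_filter_not Finset.univ (fun j : Fin n => (j : ℕ) < m)]
        congr 1
        · exact Finset.sum_congr rfl (fun x hx => by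
            simp [seqOddLB, (Finset.mem_filter.mp hx).2])
        · exact Finset.sum_congr rfl (fun x hx => by
            simp [seqOddLB, (Finset.mem_filter.mp hx).2])
    _ = m * (n - 1) + (n - m) * m := by
        rw [Finset.sum_const, Finset.sum_const, h1, h2, smul_eq_mul, smul_eq_mul]
    _ = m * (2 * n - m - 1) := by
        have h3 : 2 * n - m - 1 = (n - 1) + (n - m) := by omega
        rw [h3, Nat.mul_add, Nat.mul_comm (n - m) m]

private lemma even_sum (m n : ℕ) (hm : 2 ≤ m) (hn : 2 * m + 1 ≤ n) :
    Even (m * (2 * n - m - 1)) := by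
  rcases Nat.even_or_odd m with h | h
  · exact h.mul_right _
  · obtain ⟨k, hk⟩ := h
    have h3 : 2 * n - m - 1 = 2 * (n - k - 1) := by omega
    rw [h3]
    exact (even_two_mul _).mul_left _

/-- **Lower bound for `σ(C_{2m+1}, n)`.** For `m ≥ 2` and `n ≥ 2m+1`, the sequence
`((n-1)^m, m^{n-m})` is graphic but not potentially `C_{2m+1}`-graphic; consequently
every even integer `s` such that all graphic sequences of length `n` with sum at least
`s` are potentially `C_{2m+1}`-graphic satisfies `s ≥ m(2n - m - 1) + 2`. -/
theorem sigma_C_odd_lower (m n : ℕ) (hm : 2 ≤ m) (hn : 2 * m + 1 ≤ n) :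
    Graphic (seqOddLB m n) ∧
    ¬ PotC (2 * m + 1) (seqOddLB m n) ∧
    (∀ s : ℕ, Even s →
      (∀ e : Fin n → ℕ, Antitone e → Graphic e → s ≤ ∑ i, e i → PotC (2 * m + 1) e) →
      m * (2 * n - m - 1) + 2 ≤ s) := by
  have hg := graphic_seq m n (by omega)
  have hnp := not_potC m n hm hn
  refine ⟨hg, hnp, ?_⟩
  intro s hs h
  have hanti : Antitone (seqOddLB m n) := by
    intro i j hij
    have hij' : (i : ℕ) ≤ (j : ℕ) := hij
    simp only [seqOddLB]
    by_cases hj : (j : ℕ) < m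
    · have hi : (i : ℕ) < m := lt_of_le_of_lt hij' hj
      simp [hi, hj]
    · by_cases hi : (i : ℕ) < m <;> simp [hi, hj] <;> omega
  by_contra hcon
  push_neg at hcon
  have hsum := sum_seq m n hm hn
  have hle : s ≤ ∑ i, seqOddLB m n i := by
    rw [hsum]
    have hev := even_sum m n hm hn
    rw [Nat.even_iff] at hs hev
    omega
  exact hnp (h _ hanti hg hle)
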